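/- For every 1 ≤ p < ∞ there is a constant C > 0 (depending only on α and p) such that for all measurable f : ℝ₊ → ℂ, the continuous amalgam norm is dominated by the discrete one: sup_{y ∈ ℝ₊} (∫_0^∞ |f(x)|^p·(τ_y 1_{[0,1]})(x)·x^{2α+1} dx)^{1/p} ≤ C·‖f‖_{p,∞}. -/

import Mathlib

open MeasureTheory Real Set ENNReal ComplexOrder

noncomputable section

/-- The Haar measure `ω_α(dz) = z^(2α+1) dz` of the Bessel–Kingman hypergroup,
supported on `(0, ∞)`. -/
def omegaM (α : ℝ) : Measure ℝ :=
  (volume.restrict (Set.Ioi (0:ℝ))).withDensity fun z => ENNReal.ofReal (z ^ (2*α+1))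

/-- The interval `I_{n+1} = [n, n+1)` (0-based reindexing of the paper's `I_n = [n-1, n)`). -/
def In (n : ℕ) : Set ℝ := Set.Ico (n : ℝ) ((n : ℝ) + 1)

/-- `ω_α`-measure of the `n`-th interval. -/
def wn (α : ℝ) (n : ℕ) : ℝ≥0∞ := omegaM α (In n)

/-- The discrete amalgam norm `‖f‖_{p,q}` (with the conventions of the paper for
`p = ∞` or `q = ∞`, where the corresponding integral/sum becomes a supremum). -/
def amalgamNorm (α : ℝ) (p q : ℝ≥0∞) {E : Type*} [NormedAddCommGroup E] (f : ℝ → E) : ℝ≥0∞ :=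
  let A : ℕ → ℝ≥0∞ := fun n =>
    if p = ∞ then ⨆ x ∈ In n, (‖f x‖₊ : ℝ≥0∞)
    else ((wn α n)⁻¹ * ∫⁻ x in In n, (‖f x‖₊ : ℝ≥0∞) ^ p.toReal ∂(omegaM α)) ^ (1/p.toReal)
  if q = ∞ then ⨆ n, A n
  else (∑' n, wn α n * (A n) ^ q.toReal) ^ (1/q.toReal)

/-- The constant `C_Γ = Γ(α+1)/(Γ(1/2)·Γ(α+1/2)·2^(2α-1))`. -/
def CGamma (α : ℝ) : ℝ :=
  Real.Gamma (α+1) / (Real.Gamma (1/2) * Real.Gamma (α+1/2) * (2:ℝ) ^ (2*α-1))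

/-- The Bessel–Kingman kernel `K_α(x,y,z)`. -/
def Kker (α x y z : ℝ) : ℝ :=
  CGamma α * ((z^2 - (x-y)^2) * ((x+y)^2 - z^2)) ^ (α - 1/2) / (x*y*z) ^ (2*α)

/-- The hypergroup translation `τ_y f(x)`, with the conventions `τ_0 f = f` and
`τ_y f(0) = f(y)`. -/
def tau {E : Type*} [NormedAddCommGroup E] [NormedSpace ℝ E]
    (α y : ℝ) (f : ℝ → E) (x : ℝ) : E :=
  if y = 0 then f x
  else if x = 0 then f y
  else ∫ z in |x - y|..(x + y), (Kker α x y z * z ^ (2*α+1)) • f z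

/-- The hypergroup convolution `(f ⊛ g)(x) = ∫_0^∞ f(y)·τ_y g(x)·y^(2α+1) dy`. -/
def convBK (α : ℝ) (f g : ℝ → ℂ) (x : ℝ) : ℂ :=
  ∫ y in Set.Ioi (0:ℝ), (y ^ (2*α+1)) • (f y * tau α y g x)

/-- The modified Bessel function `j_α`. -/
def jBessel (α x : ℝ) : ℝ :=
  ∑' k : ℕ, (-1)^k * Real.Gamma (α+1) / (2^(2*k) * (k.factorial : ℝ) * Real.Gamma (α + k + 1))
    * x^(2*k)

/-- The hypergroup Fourier transform `f̂(λ) = ∫_0^∞ f(x)·j_α(λx)·x^(2α+1) dx`. -/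
def fourierBK (α : ℝ) (f : ℝ → ℂ) (lam : ℝ) : ℂ :=
  ∫ x in Set.Ioi (0:ℝ), (jBessel α (lam * x) * x ^ (2*α+1)) • f x

/-- The continuous `(p,∞)`-amalgam norm
`sup_{y ≥ 0} (∫_0^∞ |f(x)|^p · τ_y 1_{[0,1]}(x) · x^(2α+1) dx)^(1/p)`. -/
def contNorm (α p : ℝ) {E : Type*} [NormedAddCommGroup E] (f : ℝ → E) : ℝ≥0∞ :=
  ⨆ y ∈ Set.Ici (0:ℝ),
    (∫⁻ x, (‖f x‖₊ : ℝ≥0∞) ^ p *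
        ENNReal.ofReal (tau α y ((Set.Icc (0:ℝ) 1).indicator 1) x) ∂(omegaM α)) ^ (1/p)

/-- The weight `ω_n = ∫_{n-1}^{n} z^(2α+1) dz`, as a real number. -/
def wIn (α : ℝ) (n : ℕ) : ℝ := ∫ z in ((n:ℝ)-1)..(n:ℝ), z ^ (2*α+1)

section AuxAmalgam

open MeasureTheory Set Filter

lemma CGamma_pos {α : ℝ} (hα : 1/2 ≤ α) : 0 < CGamma α := by
  have h1 : 0 < Real.Gamma (α+1) := Real.Gamma_pos_of_pos (by linarith)
  have h2 : 0 < Real.Gamma (1/2) := Real.Gamma_pos_of_pos (by norm_num)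
  have h3 : 0 < Real.Gamma (α+1/2) := Real.Gamma_pos_of_pos (by linarith)
  have h4 : (0:ℝ) < (2:ℝ) ^ (2*α-1) := Real.rpow_pos_of_pos (by norm_num) _
  exact div_pos h1 (by positivity)

lemma kernel_eq {α x y z : ℝ} (hx : 0 < x) (hy : 0 < y) (hz : 0 < z) :
    Kker α x y z * z ^ (2*α+1) =
      CGamma α * ((z^2-(x-y)^2)*((x+y)^2-z^2)) ^ (α-1/2) * z / (x*y) ^ (2*α) := by
  have hxyz : (x*y*z) ^ (2*α) = (x*y)^(2*α) * z^(2*α) := Real.mul_rpow (by positivity) hz.le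
  have hz2 : z ^ (2*α+1) = z ^ (2*α) * z := by rw [Real.rpow_add hz, Real.rpow_one]
  have h1 : (x*y) ^ (2*α) ≠ 0 := by positivity
  have h2 : z ^ (2*α) ≠ 0 := by positivity
  simp only [Kker]
  rw [hxyz, hz2]
  field_simp

lemma tau_eq_setIntegral {α x y : ℝ} (hx : 0 < x) (hy : 0 < y) :
    tau α y ((Set.Icc (0:ℝ) 1).indicator 1 : ℝ → ℝ) x
      = ∫ z in Set.Ioc |x-y| (x+y) ∩ Set.Icc 0 1, Kker α x y z * z ^ (2*α+1) := by
  have hab : |x - y| ≤ x + y := abs_le.mpr ⟨by linarith, by linarith⟩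
  have hind : ∀ z : ℝ, (Kker α x y z * z ^ (2*α+1)) • ((Set.Icc (0:ℝ) 1).indicator 1 z : ℝ)
      = (Set.Icc (0:ℝ) 1).indicator (fun z => Kker α x y z * z ^ (2*α+1)) z := by
    intro z
    by_cases hz : z ∈ Set.Icc (0:ℝ) 1 <;> simp [hz]
  simp only [tau, if_neg hy.ne', if_neg hx.ne']
  rw [intervalIntegral.integral_of_le hab]
  simp_rw [hind]
  rw [MeasureTheory.setIntegral_indicator measurableSet_Icc]

lemma minmax_facts {x y : ℝ} (hx : 0 < x) (hy : 0 < y) :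
    (x + y) - |x - y| = 2 * min x y ∧ min x y * (x + y) ≤ 2 * (x*y) := by
  rcases le_total x y with h | h
  · rw [abs_of_nonpos (by linarith), min_eq_left h]
    exact ⟨by ring, by nlinarith⟩
  · rw [abs_of_nonneg (by linarith), min_eq_right h]
    exact ⟨by ring, by nlinarith⟩

lemma tau_eq_zero {α x y : ℝ} (hx : 0 < x) (hy : 0 < y) (h1 : 1 < |x - y|) :
    tau α y ((Set.Icc (0:ℝ) 1).indicator 1 : ℝ → ℝ) x = 0 := by
  rw [tau_eq_setIntegral hx hy]
  have hemp : Set.Ioc |x-y| (x+y) ∩ Set.Icc (0:ℝ) 1 = ∅ := by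
    ext z
    simp only [Set.mem_inter_iff, Set.mem_Ioc, Set.mem_Icc, Set.mem_empty_iff_false, iff_false,
      not_and]
    rintro ⟨h2, _⟩ _ h4
    linarith
  rw [hemp]
  simp

lemma kernel_bound1 {α : ℝ} (hα : 1/2 ≤ α) {x y z : ℝ} (hx : 0 < x) (hy : 0 < y)
    (haz : |x - y| < z) (hzb : z ≤ x + y) (hz1 : z ≤ 1) :
    CGamma α * ((z^2-(x-y)^2)*((x+y)^2-z^2)) ^ (α-1/2) * z / (x*y) ^ (2*α)
      ≤ CGamma α * 4^(2*α-1) * 2^(2*α) / min x y := by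
  obtain ⟨hsum, hprod⟩ := minmax_facts hx hy
  have hCG := CGamma_pos hα
  have hm0 : 0 < min x y := lt_min hx hy
  have hb0 : 0 < x + y := by positivity
  have ha0 : 0 ≤ |x - y| := abs_nonneg _
  have hz : 0 < z := lt_of_le_of_lt ha0 haz
  have hsq : (x-y)^2 = |x-y|^2 := (sq_abs _).symm
  set m := min x y with hmdef
  set a := |x - y| with hadef
  have hab : a ≤ x + y := by linarith
  have hexp : (0:ℝ) ≤ α - 1/2 := by linarith
  have hP1 : 0 ≤ z^2 - (x-y)^2 := by
    have h := mul_nonneg (sub_nonneg.mpr haz.le) (show (0:ℝ) ≤ z + a by linarith)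
    nlinarith [h]
  have hP2 : 0 ≤ (x+y)^2 - z^2 := by nlinarith
  have hPn : 0 ≤ (z^2-(x-y)^2)*((x+y)^2-z^2) := mul_nonneg hP1 hP2
  have hmb : (0:ℝ) < 4*m*(x+y) := by positivity
  have e1 : z^2 - (x-y)^2 ≤ 4*m*(x+y) := by
    have h := mul_le_mul (show z - a ≤ 2*m by linarith) (show z + a ≤ 2*(x+y) by linarith)
      (show (0:ℝ) ≤ z + a by linarith) (show (0:ℝ) ≤ 2*m by linarith)
    nlinarith [h]
  have e2 : (x+y)^2 - z^2 ≤ 4*m*(x+y) := by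
    have h := mul_le_mul (show (x+y) - z ≤ 2*m by linarith) (show (x+y) + z ≤ 2*(x+y) by linarith)
      (show (0:ℝ) ≤ (x+y) + z by linarith) (show (0:ℝ) ≤ 2*m by linarith)
    nlinarith [h]
  have hP : (z^2-(x-y)^2)*((x+y)^2-z^2) ≤ (4*m*(x+y))^2 := by
    have h := mul_le_mul e1 e2 hP2 hmb.le
    nlinarith [h]
  have hPe : ((z^2-(x-y)^2)*((x+y)^2-z^2)) ^ (α-1/2) ≤ (4*m*(x+y)) ^ (2*α-1) := by
    calc ((z^2-(x-y)^2)*((x+y)^2-z^2)) ^ (α-1/2) ≤ ((4*m*(x+y))^2) ^ (α-1/2) :=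
          Real.rpow_le_rpow hPn hP hexp
      _ = (4*m*(x+y)) ^ (2*α-1) := by
          rw [← Real.rpow_natCast (4*m*(x+y)) 2, ← Real.rpow_mul hmb.le]
          congr 1
          push_cast
          ring
  have hnum : CGamma α * ((z^2-(x-y)^2)*((x+y)^2-z^2)) ^ (α-1/2) * z
      ≤ CGamma α * (4*m*(x+y)) ^ (2*α-1) * (x+y) :=
    mul_le_mul (mul_le_mul_of_nonneg_left hPe hCG.le) hzb hz.le
      (mul_nonneg hCG.le (Real.rpow_nonneg hmb.le _))
  have hden : (m*(x+y)/2) ^ (2*α) ≤ (x*y) ^ (2*α) :=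
    Real.rpow_le_rpow (by positivity) (by linarith) (by linarith)
  have hden0 : (0:ℝ) < (m*(x+y)/2) ^ (2*α) := Real.rpow_pos_of_pos (by positivity) _
  have hnum0 : 0 ≤ CGamma α * (4*m*(x+y)) ^ (2*α-1) * (x+y) :=
    mul_nonneg (mul_nonneg hCG.le (Real.rpow_nonneg hmb.le _)) hb0.le
  have step : CGamma α * ((z^2-(x-y)^2)*((x+y)^2-z^2)) ^ (α-1/2) * z / (x*y) ^ (2*α)
      ≤ CGamma α * (4*m*(x+y)) ^ (2*α-1) * (x+y) / (m*(x+y)/2) ^ (2*α) :=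
    div_le_div₀ hnum0 hnum hden0 hden
  refine step.trans (le_of_eq ?_)
  have em : m ^ (2*α) = m ^ (2*α-1) * m := by
    have h := Real.rpow_add hm0 (2*α-1) 1
    rw [Real.rpow_one] at h
    rw [← h]
    congr 1
    ring
  have eb : (x+y) ^ (2*α) = (x+y) ^ (2*α-1) * (x+y) := by
    have h := Real.rpow_add hb0 (2*α-1) 1
    rw [Real.rpow_one] at h
    rw [← h]
    congr 1
    ring
  rw [Real.mul_rpow (by positivity) hb0.le, Real.mul_rpow (by norm_num) hm0.le,
    Real.div_rpow (by positivity) (by norm_num), Real.mul_rpow hm0.le hb0.le, em, eb]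
  have hmn : m ^ (2*α-1) ≠ 0 := by positivity
  have hbn : (x+y) ^ (2*α-1) ≠ 0 := by positivity
  have h2n : (2:ℝ) ^ (2*α) ≠ 0 := by positivity
  field_simp

lemma kernel_bound2 {α : ℝ} (hα : 1/2 ≤ α) {x y z : ℝ} (h5 : 5 ≤ x) (hy : 0 < y)
    (hd1 : -1 ≤ x - y) (hd2 : x - y ≤ 1) (haz : |x - y| < z) (hzb : z ≤ x + y) (hz1 : z ≤ 1) :
    CGamma α * ((z^2-(x-y)^2)*((x+y)^2-z^2)) ^ (α-1/2) * z / (x*y) ^ (2*α)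
      ≤ CGamma α * 3^(2*α-1) * (5/4)^(2*α) * x ^ (-(2*α+1)) := by
  have hx : (0:ℝ) < x := by linarith
  have hCG := CGamma_pos hα
  have hz : 0 < z := lt_of_le_of_lt (abs_nonneg _) haz
  have hexp : (0:ℝ) ≤ α - 1/2 := by linarith
  have hyx : 4/5 * x ≤ y := by linarith
  have hb3 : x + y ≤ 3*x := by linarith
  have hb0 : (0:ℝ) < x + y := by positivity
  have hP1 : 0 ≤ z^2 - (x-y)^2 := by
    have h := mul_nonneg (sub_nonneg.mpr haz.le)
      (show (0:ℝ) ≤ z + |x - y| by positivity)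
    nlinarith [h, sq_abs (x-y)]
  have hP2 : 0 ≤ (x+y)^2 - z^2 := by nlinarith
  have hPn : 0 ≤ (z^2-(x-y)^2)*((x+y)^2-z^2) := mul_nonneg hP1 hP2
  have t1 : z^2 - (x-y)^2 ≤ z := by nlinarith [sq_nonneg (x-y), mul_le_mul_of_nonneg_left hz1 hz.le]
  have t2 : (x+y)^2 - z^2 ≤ (x+y)^2 := by nlinarith
  have hP : (z^2-(x-y)^2)*((x+y)^2-z^2) ≤ z*(x+y)^2 := mul_le_mul t1 t2 hP2 hz.le
  have hPe : ((z^2-(x-y)^2)*((x+y)^2-z^2)) ^ (α-1/2) ≤ (x+y) ^ (2*α-1) := by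
    calc ((z^2-(x-y)^2)*((x+y)^2-z^2)) ^ (α-1/2)
        ≤ (z*(x+y)^2) ^ (α-1/2) := Real.rpow_le_rpow hPn hP hexp
      _ = z^(α-1/2) * ((x+y)^2)^(α-1/2) := Real.mul_rpow hz.le (by positivity)
      _ ≤ 1 * ((x+y)^2)^(α-1/2) :=
          mul_le_mul_of_nonneg_right (Real.rpow_le_one hz.le hz1 hexp)
            (Real.rpow_nonneg (by positivity) _)
      _ = (x+y) ^ (2*α-1) := by
          rw [one_mul, ← Real.rpow_natCast (x+y) 2, ← Real.rpow_mul hb0.le]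
          congr 1
          push_cast
          ring
  have h3x : (x+y) ^ (2*α-1) ≤ (3*x) ^ (2*α-1) :=
    Real.rpow_le_rpow hb0.le hb3 (by linarith)
  have hnum : CGamma α * ((z^2-(x-y)^2)*((x+y)^2-z^2)) ^ (α-1/2) * z
      ≤ CGamma α * (3*x) ^ (2*α-1) * 1 :=
    mul_le_mul (mul_le_mul_of_nonneg_left (hPe.trans h3x) hCG.le) hz1 hz.le
      (mul_nonneg hCG.le (Real.rpow_nonneg (by positivity) _))
  have hdle : (4/5*x^2) ^ (2*α) ≤ (x*y) ^ (2*α) :=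
    Real.rpow_le_rpow (by positivity) (by nlinarith) (by linarith)
  have hd0 : (0:ℝ) < (4/5*x^2) ^ (2*α) := Real.rpow_pos_of_pos (by positivity) _
  have step : CGamma α * ((z^2-(x-y)^2)*((x+y)^2-z^2)) ^ (α-1/2) * z / (x*y) ^ (2*α)
      ≤ CGamma α * (3*x) ^ (2*α-1) * 1 / (4/5*x^2) ^ (2*α) :=
    div_le_div₀ (mul_nonneg (mul_nonneg hCG.le (Real.rpow_nonneg (by positivity) _)) one_pos.le)
      hnum hd0 hdle
  refine step.trans (le_of_eq ?_)
  rw [mul_one, Real.mul_rpow (by norm_num) hx.le, Real.mul_rpow (by norm_num) (by positivity)]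
  have hx2 : ((x^2:ℝ)) ^ (2*α) = x ^ (2*α-1) * x ^ (2*α+1) := by
    rw [← Real.rpow_natCast x 2, ← Real.rpow_mul hx.le, ← Real.rpow_add hx]
    congr 1
    push_cast
    ring
  rw [hx2, Real.rpow_neg hx.le]
  have ne1 : x ^ (2*α-1) ≠ 0 := by positivity
  have ne2 : x ^ (2*α+1) ≠ 0 := by positivity
  have ne3 : ((4:ℝ)/5) ^ (2*α) ≠ 0 := by positivity
  have h45 : ((5:ℝ)/4) ^ (2*α) * ((4:ℝ)/5) ^ (2*α) = 1 := by
    rw [← Real.mul_rpow (by norm_num) (by norm_num)]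
    norm_num
  field_simp
  linear_combination (-1) * h45

lemma tau_le_bdd {α : ℝ} (hα : 1/2 ≤ α) {x y : ℝ} (hx : 0 < x) (hy : 0 < y) :
    tau α y ((Set.Icc (0:ℝ) 1).indicator 1 : ℝ → ℝ) x
      ≤ 2 * (CGamma α * 4^(2*α-1) * 2^(2*α)) := by
  have hm0 : 0 < min x y := lt_min hx hy
  have hCG := CGamma_pos hα
  have h4p : (0:ℝ) < (4:ℝ)^(2*α-1) := Real.rpow_pos_of_pos (by norm_num) _
  have h2p : (0:ℝ) < (2:ℝ)^(2*α) := Real.rpow_pos_of_pos (by norm_num) _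
  have hD1pos : 0 < CGamma α * 4^(2*α-1) * 2^(2*α) := by positivity
  rw [tau_eq_setIntegral hx hy]
  have hSm : MeasurableSet (Set.Ioc |x-y| (x+y) ∩ Set.Icc (0:ℝ) 1) :=
    measurableSet_Ioc.inter measurableSet_Icc
  have hvol : volume (Set.Ioc |x-y| (x+y) ∩ Set.Icc (0:ℝ) 1)
      ≤ ENNReal.ofReal (2 * min x y) := by
    obtain ⟨hsum, _⟩ := minmax_facts hx hy
    calc volume (Set.Ioc |x-y| (x+y) ∩ Set.Icc (0:ℝ) 1)
        ≤ volume (Set.Ioc |x-y| (x+y)) := measure_mono Set.inter_subset_left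
      _ = ENNReal.ofReal ((x+y) - |x-y|) := by rw [Real.volume_Ioc]
      _ = ENNReal.ofReal (2 * min x y) := by rw [hsum]
  have hfin : volume (Set.Ioc |x-y| (x+y) ∩ Set.Icc (0:ℝ) 1) < ⊤ :=
    lt_of_le_of_lt hvol ENNReal.ofReal_lt_top
  have hpt : ∀ z ∈ Set.Ioc |x-y| (x+y) ∩ Set.Icc (0:ℝ) 1,
      ‖Kker α x y z * z ^ (2*α+1)‖ ≤ CGamma α * 4^(2*α-1) * 2^(2*α) / min x y := by
    rintro z ⟨⟨haz, hzb⟩, hz0, hz1⟩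
    have hz : 0 < z := lt_of_le_of_lt (abs_nonneg _) haz
    rw [kernel_eq hx hy hz]
    have hP1 : 0 ≤ z^2 - (x-y)^2 := by
      have h := mul_nonneg (sub_nonneg.mpr haz.le) (show (0:ℝ) ≤ z + |x-y| by positivity)
      nlinarith [h, sq_abs (x-y)]
    have hP2 : 0 ≤ (x+y)^2 - z^2 := by nlinarith
    have hPn : 0 ≤ (z^2-(x-y)^2)*((x+y)^2-z^2) := mul_nonneg hP1 hP2
    have hxy0 : (0:ℝ) < (x*y) ^ (2*α) := Real.rpow_pos_of_pos (by positivity) _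
    have hnn : 0 ≤ CGamma α * ((z^2-(x-y)^2)*((x+y)^2-z^2)) ^ (α-1/2) * z / (x*y) ^ (2*α) :=
      div_nonneg (mul_nonneg (mul_nonneg hCG.le (Real.rpow_nonneg hPn _)) hz.le) hxy0.le
    rw [Real.norm_eq_abs, abs_of_nonneg hnn]
    exact kernel_bound1 hα hx hy haz hzb hz1
  have hτ := norm_setIntegral_le_of_norm_le_const_ae' hfin (Filter.Eventually.of_forall hpt)
  refine (le_abs_self _).trans ?_
  rw [← Real.norm_eq_abs]
  refine hτ.trans ?_
  have ht : (volume (Set.Ioc |x-y| (x+y) ∩ Set.Icc (0:ℝ) 1)).toReal ≤ 2 * min x y :=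
    ENNReal.toReal_le_of_le_ofReal (by positivity) hvol
  calc CGamma α * 4^(2*α-1) * 2^(2*α) / min x y
        * (volume (Set.Ioc |x-y| (x+y) ∩ Set.Icc (0:ℝ) 1)).toReal
      ≤ CGamma α * 4^(2*α-1) * 2^(2*α) / min x y * (2 * min x y) :=
        mul_le_mul_of_nonneg_left ht (by positivity)
    _ = 2 * (CGamma α * 4^(2*α-1) * 2^(2*α)) := by
        field_simp

lemma tau_le_decay {α : ℝ} (hα : 1/2 ≤ α) {x y : ℝ} (h5 : 5 ≤ x) (hy : 0 < y) :
    tau α y ((Set.Icc (0:ℝ) 1).indicator 1 : ℝ → ℝ) x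
      ≤ CGamma α * 3^(2*α-1) * (5/4)^(2*α) * x ^ (-(2*α+1)) := by
  have hx : (0:ℝ) < x := by linarith
  have hCG := CGamma_pos hα
  have h3p : (0:ℝ) < (3:ℝ)^(2*α-1) := Real.rpow_pos_of_pos (by norm_num) _
  have h54p : (0:ℝ) < ((5:ℝ)/4)^(2*α) := Real.rpow_pos_of_pos (by norm_num) _
  have hxp : (0:ℝ) < x ^ (-(2*α+1)) := Real.rpow_pos_of_pos hx _
  have hc0 : 0 ≤ CGamma α * 3^(2*α-1) * (5/4)^(2*α) * x ^ (-(2*α+1)) := by positivity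
  by_cases habs : 1 < |x - y|
  · rw [tau_eq_zero hx hy habs]
    exact hc0
  push_neg at habs
  obtain ⟨hd1, hd2⟩ := abs_le.mp habs
  rw [tau_eq_setIntegral hx hy]
  have hSm : MeasurableSet (Set.Ioc |x-y| (x+y) ∩ Set.Icc (0:ℝ) 1) :=
    measurableSet_Ioc.inter measurableSet_Icc
  have hvol : volume (Set.Ioc |x-y| (x+y) ∩ Set.Icc (0:ℝ) 1) ≤ 1 := by
    calc volume (Set.Ioc |x-y| (x+y) ∩ Set.Icc (0:ℝ) 1)
        ≤ volume (Set.Icc (0:ℝ) 1) := measure_mono Set.inter_subset_right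
      _ = 1 := by rw [Real.volume_Icc]; norm_num
  have hfin : volume (Set.Ioc |x-y| (x+y) ∩ Set.Icc (0:ℝ) 1) < ⊤ :=
    lt_of_le_of_lt hvol ENNReal.one_lt_top
  have hpt : ∀ z ∈ Set.Ioc |x-y| (x+y) ∩ Set.Icc (0:ℝ) 1,
      ‖Kker α x y z * z ^ (2*α+1)‖
        ≤ CGamma α * 3^(2*α-1) * (5/4)^(2*α) * x ^ (-(2*α+1)) := by
    rintro z ⟨⟨haz, hzb⟩, hz0, hz1⟩
    have hz : 0 < z := lt_of_le_of_lt (abs_nonneg _) haz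
    rw [kernel_eq hx hy hz]
    have hP1 : 0 ≤ z^2 - (x-y)^2 := by
      have h := mul_nonneg (sub_nonneg.mpr haz.le) (show (0:ℝ) ≤ z + |x-y| by positivity)
      nlinarith [h, sq_abs (x-y)]
    have hP2 : 0 ≤ (x+y)^2 - z^2 := by nlinarith
    have hPn : 0 ≤ (z^2-(x-y)^2)*((x+y)^2-z^2) := mul_nonneg hP1 hP2
    have hxy0 : (0:ℝ) < (x*y) ^ (2*α) := Real.rpow_pos_of_pos (by positivity) _
    have hnn : 0 ≤ CGamma α * ((z^2-(x-y)^2)*((x+y)^2-z^2)) ^ (α-1/2) * z / (x*y) ^ (2*α) :=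
      div_nonneg (mul_nonneg (mul_nonneg hCG.le (Real.rpow_nonneg hPn _)) hz.le) hxy0.le
    rw [Real.norm_eq_abs, abs_of_nonneg hnn]
    exact kernel_bound2 hα h5 hy hd1 hd2 haz hzb hz1
  have hτ := norm_setIntegral_le_of_norm_le_const_ae' hfin (Filter.Eventually.of_forall hpt)
  refine (le_abs_self _).trans ?_
  rw [← Real.norm_eq_abs]
  refine hτ.trans ?_
  have ht : (volume (Set.Ioc |x-y| (x+y) ∩ Set.Icc (0:ℝ) 1)).toReal ≤ 1 := by
    apply ENNReal.toReal_le_of_le_ofReal (by norm_num)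
    rw [ENNReal.ofReal_one]
    exact hvol
  calc CGamma α * 3^(2*α-1) * (5/4)^(2*α) * x ^ (-(2*α+1))
        * (volume (Set.Ioc |x-y| (x+y) ∩ Set.Icc (0:ℝ) 1)).toReal
      ≤ CGamma α * 3^(2*α-1) * (5/4)^(2*α) * x ^ (-(2*α+1)) * 1 :=
        mul_le_mul_of_nonneg_left ht hc0
    _ = CGamma α * 3^(2*α-1) * (5/4)^(2*α) * x ^ (-(2*α+1)) := mul_one _

lemma tau_master {α : ℝ} (hα : 1/2 ≤ α) :
    ∃ D : ℝ, 1 ≤ D ∧ ∀ x y : ℝ, 0 < x → 0 ≤ y →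
      tau α y ((Set.Icc (0:ℝ) 1).indicator 1 : ℝ → ℝ) x ≤ D ∧
      (1 < |x - y| → tau α y ((Set.Icc (0:ℝ) 1).indicator 1 : ℝ → ℝ) x = 0) ∧
      (5 ≤ x → tau α y ((Set.Icc (0:ℝ) 1).indicator 1 : ℝ → ℝ) x ≤ D * x ^ (-(2*α+1))) := by
  have hCG := CGamma_pos hα
  have h4p : (0:ℝ) < (4:ℝ)^(2*α-1) := Real.rpow_pos_of_pos (by norm_num) _
  have h2p : (0:ℝ) < (2:ℝ)^(2*α) := Real.rpow_pos_of_pos (by norm_num) _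
  have h3p : (0:ℝ) < (3:ℝ)^(2*α-1) := Real.rpow_pos_of_pos (by norm_num) _
  have h54p : (0:ℝ) < ((5:ℝ)/4)^(2*α) := Real.rpow_pos_of_pos (by norm_num) _
  set D1 := CGamma α * 4^(2*α-1) * 2^(2*α) with hD1
  set D2 := CGamma α * 3^(2*α-1) * (5/4)^(2*α) with hD2
  have hD1p : 0 < D1 := by positivity
  have hD2p : 0 < D2 := by positivity
  refine ⟨1 + 2*D1 + D2, by linarith, ?_⟩
  intro x y hx hy
  rcases eq_or_lt_of_le hy with hy0 | hy0
  · subst hy0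
    have htau0 : tau α 0 ((Set.Icc (0:ℝ) 1).indicator 1 : ℝ → ℝ) x
        = (Set.Icc (0:ℝ) 1).indicator 1 x := by simp [tau]
    rw [htau0]
    have hxp : (0:ℝ) < x ^ (-(2*α+1)) := Real.rpow_pos_of_pos hx _
    refine ⟨?_, ?_, ?_⟩
    · by_cases hmem : x ∈ Set.Icc (0:ℝ) 1
      · rw [Set.indicator_of_mem hmem]
        simp only [Pi.one_apply]
        linarith
      · rw [Set.indicator_of_notMem hmem]
        linarith
    · intro h1
      rw [sub_zero, abs_of_pos hx] at h1
      have hnot : x ∉ Set.Icc (0:ℝ) 1 := by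
        simp only [Set.mem_Icc, not_and, not_le]
        intro _
        linarith
      rw [Set.indicator_of_notMem hnot]
    · intro h5
      have hnot : x ∉ Set.Icc (0:ℝ) 1 := by
        simp only [Set.mem_Icc, not_and, not_le]
        intro _
        linarith
      rw [Set.indicator_of_notMem hnot]
      have : 0 ≤ (1 + 2*D1 + D2) * x ^ (-(2*α+1)) :=
        mul_nonneg (by linarith) hxp.le
      linarith
  · refine ⟨(tau_le_bdd hα hx hy0).trans (by linarith),
      fun h1 => tau_eq_zero hx hy0 h1, fun h5 => ?_⟩
    refine (tau_le_decay hα h5 hy0).trans ?_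
    have hxp : (0:ℝ) ≤ x ^ (-(2*α+1)) := Real.rpow_nonneg (by linarith) _
    exact mul_le_mul_of_nonneg_right (by linarith) hxp

lemma In_meas (n : ℕ) : MeasurableSet (In n) := by
  unfold In
  exact measurableSet_Ico

lemma omega_apply {α : ℝ} {s : Set ℝ} (hs : MeasurableSet s) :
    omegaM α s = ∫⁻ z in s ∩ Set.Ioi 0, ENNReal.ofReal (z ^ (2*α+1)) ∂volume := by
  simp only [omegaM]
  rw [withDensity_apply _ hs, Measure.restrict_restrict hs]

lemma wn_le {α : ℝ} (hα : 1/2 ≤ α) (n : ℕ) :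
    wn α n ≤ ENNReal.ofReal (((n:ℝ)+1) ^ (2*α+1)) := by
  have h := omega_apply (α := α) (In_meas n)
  simp only [wn]
  rw [h]
  calc ∫⁻ z in In n ∩ Set.Ioi 0, ENNReal.ofReal (z ^ (2*α+1)) ∂volume
      ≤ ∫⁻ _ in In n ∩ Set.Ioi 0, ENNReal.ofReal (((n:ℝ)+1) ^ (2*α+1)) ∂volume := by
        apply setLIntegral_mono' ((In_meas n).inter measurableSet_Ioi)
        rintro z ⟨hzI, hz0⟩
        simp only [In, Set.mem_Ico] at hzI
        exact ENNReal.ofReal_le_ofReal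
          (Real.rpow_le_rpow (le_of_lt hz0) hzI.2.le (by linarith))
    _ = ENNReal.ofReal (((n:ℝ)+1) ^ (2*α+1)) * volume (In n ∩ Set.Ioi 0) :=
        setLIntegral_const _ _
    _ ≤ ENNReal.ofReal (((n:ℝ)+1) ^ (2*α+1)) * 1 := by
        apply mul_le_mul_right
        calc volume (In n ∩ Set.Ioi 0) ≤ volume (In n) := measure_mono Set.inter_subset_left
          _ = 1 := by
              simp only [In]
              rw [Real.volume_Ico, add_sub_cancel_left, ENNReal.ofReal_one]
    _ = ENNReal.ofReal (((n:ℝ)+1) ^ (2*α+1)) := mul_one _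

lemma wn_ne_top {α : ℝ} (hα : 1/2 ≤ α) (n : ℕ) : wn α n ≠ ⊤ :=
  (lt_of_le_of_lt (wn_le hα n) ENNReal.ofReal_lt_top).ne

lemma wn_ne_zero {α : ℝ} (hα : 1/2 ≤ α) (n : ℕ) : wn α n ≠ 0 := by
  have hn : (0:ℝ) ≤ n := Nat.cast_nonneg n
  have hsub : Set.Ioc ((n:ℝ)+1/4) ((n:ℝ)+1/2) ⊆ In n ∩ Set.Ioi 0 := by
    rintro z ⟨h1, h2⟩
    refine ⟨?_, ?_⟩
    · simp only [In, Set.mem_Ico]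
      constructor <;> linarith
    · simp only [Set.mem_Ioi]
      linarith
  have hlow : ENNReal.ofReal ((4:ℝ)⁻¹ ^ (2*α+1)) * ENNReal.ofReal (1/4) ≤ wn α n := by
    calc ENNReal.ofReal ((4:ℝ)⁻¹ ^ (2*α+1)) * ENNReal.ofReal (1/4)
        = ∫⁻ _ in Set.Ioc ((n:ℝ)+1/4) ((n:ℝ)+1/2),
            ENNReal.ofReal ((4:ℝ)⁻¹ ^ (2*α+1)) ∂volume := by
          rw [setLIntegral_const, Real.volume_Ioc]
          congr 1
          ring
      _ ≤ ∫⁻ z in Set.Ioc ((n:ℝ)+1/4) ((n:ℝ)+1/2), ENNReal.ofReal (z ^ (2*α+1)) ∂volume := by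
          apply setLIntegral_mono' measurableSet_Ioc
          rintro z ⟨h1, h2⟩
          exact ENNReal.ofReal_le_ofReal
            (Real.rpow_le_rpow (by norm_num) (by linarith) (by linarith))
      _ ≤ ∫⁻ z in In n ∩ Set.Ioi 0, ENNReal.ofReal (z ^ (2*α+1)) ∂volume :=
          lintegral_mono_set hsub
      _ = wn α n := by
          simp only [wn]
          rw [omega_apply (α := α) (In_meas n)]
  intro h0
  rw [h0, nonpos_iff_eq_zero, mul_eq_zero] at hlow
  have c1 : (0:ℝ) < (4:ℝ)⁻¹ ^ (2*α+1) := Real.rpow_pos_of_pos (by norm_num) _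
  rcases hlow with h | h <;> rw [ENNReal.ofReal_eq_zero] at h <;> linarith

lemma Jle {α : ℝ} (hα : 1/2 ≤ α) {p : ℝ} (hp : 1 ≤ p) (f : ℝ → ℂ) (n : ℕ) :
    ∫⁻ x in In n, (‖f x‖₊:ℝ≥0∞)^p ∂(omegaM α)
      ≤ wn α n * (amalgamNorm α (ENNReal.ofReal p) ⊤ f)^p := by
  have hp0 : (0:ℝ) < p := by linarith
  have hA : amalgamNorm α (ENNReal.ofReal p) ⊤ f
      = ⨆ k, ((wn α k)⁻¹ * ∫⁻ x in In k, (‖f x‖₊:ℝ≥0∞)^p ∂(omegaM α)) ^ (1/p) := by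
    simp only [amalgamNorm, if_pos rfl, if_neg ENNReal.ofReal_ne_top,
      ENNReal.toReal_ofReal hp0.le, if_true]
  have h1 : ((wn α n)⁻¹ * ∫⁻ x in In n, (‖f x‖₊:ℝ≥0∞)^p ∂(omegaM α)) ^ (1/p)
      ≤ amalgamNorm α (ENNReal.ofReal p) ⊤ f := by
    rw [hA]
    exact le_iSup
      (fun k => ((wn α k)⁻¹ * ∫⁻ x in In k, (‖f x‖₊:ℝ≥0∞)^p ∂(omegaM α)) ^ (1/p)) n
  have h2 := ENNReal.rpow_le_rpow h1 hp0.le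
  rw [← ENNReal.rpow_mul, one_div_mul_cancel hp0.ne', ENNReal.rpow_one] at h2
  calc ∫⁻ x in In n, (‖f x‖₊:ℝ≥0∞)^p ∂(omegaM α)
      = wn α n * ((wn α n)⁻¹ * ∫⁻ x in In n, (‖f x‖₊:ℝ≥0∞)^p ∂(omegaM α)) := by
        rw [← mul_assoc, ENNReal.mul_inv_cancel (wn_ne_zero hα n) (wn_ne_top hα n), one_mul]
    _ ≤ wn α n * (amalgamNorm α (ENNReal.ofReal p) ⊤ f)^p := mul_le_mul_right h2 _

lemma cover5 : Set.Ioo (0:ℝ) 5 ⊆ (((In 0 ∪ In 1) ∪ In 2) ∪ In 3) ∪ In 4 := by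
  rintro x ⟨h0, h5⟩
  simp only [In, Set.mem_union, Set.mem_Ico]
  push_cast
  rcases lt_or_ge x 1 with h1 | h1
  · exact Or.inl (Or.inl (Or.inl (Or.inl ⟨by linarith, by linarith⟩)))
  rcases lt_or_ge x 2 with h2 | h2
  · exact Or.inl (Or.inl (Or.inl (Or.inr ⟨by linarith, by linarith⟩)))
  rcases lt_or_ge x 3 with h3 | h3
  · exact Or.inl (Or.inl (Or.inr ⟨by linarith, by linarith⟩))
  rcases lt_or_ge x 4 with h4 | h4
  · exact Or.inl (Or.inr ⟨by linarith, by linarith⟩)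
  · exact Or.inr ⟨by linarith, by linarith⟩

lemma piece1 {α : ℝ} (hα : 1/2 ≤ α) {p : ℝ} (hp : 1 ≤ p) (f : ℝ → ℂ) :
    ∫⁻ x in Set.Ioo (0:ℝ) 5, (‖f x‖₊:ℝ≥0∞)^p ∂(omegaM α)
      ≤ ENNReal.ofReal (5 * 5^(2*α+1)) * (amalgamNorm α (ENNReal.ofReal p) ⊤ f)^p := by
  set N := amalgamNorm α (ENNReal.ofReal p) ⊤ f with hN
  have key : ∀ m : ℕ, (m:ℝ) + 1 ≤ 5 → ∫⁻ x in In m, (‖f x‖₊:ℝ≥0∞)^p ∂(omegaM α)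
      ≤ ENNReal.ofReal (5^(2*α+1)) * N^p := by
    intro m hm5
    refine (Jle hα hp f m).trans (mul_le_mul_left ((wn_le hα m).trans ?_) _)
    exact ENNReal.ofReal_le_ofReal (Real.rpow_le_rpow (by positivity) hm5 (by linarith))
  have c0 := key 0 (by norm_num)
  have c1 := key 1 (by norm_num)
  have c2 := key 2 (by norm_num)
  have c3 := key 3 (by norm_num)
  have c4 := key 4 (by norm_num)
  calc ∫⁻ x in Set.Ioo (0:ℝ) 5, (‖f x‖₊:ℝ≥0∞)^p ∂(omegaM α)
      ≤ ∫⁻ x in (((In 0 ∪ In 1) ∪ In 2) ∪ In 3) ∪ In 4, (‖f x‖₊:ℝ≥0∞)^p ∂(omegaM α) :=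
        lintegral_mono_set cover5
    _ ≤ ENNReal.ofReal (5^(2*α+1)) * N^p + ENNReal.ofReal (5^(2*α+1)) * N^p
        + ENNReal.ofReal (5^(2*α+1)) * N^p + ENNReal.ofReal (5^(2*α+1)) * N^p
        + ENNReal.ofReal (5^(2*α+1)) * N^p := by
        refine (lintegral_union_le _ _ _).trans (add_le_add ?_ c4)
        refine (lintegral_union_le _ _ _).trans (add_le_add ?_ c3)
        refine (lintegral_union_le _ _ _).trans (add_le_add ?_ c2)
        exact (lintegral_union_le _ _ _).trans (add_le_add c0 c1)
    _ = ENNReal.ofReal (5 * 5^(2*α+1)) * N^p := by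
        rw [ENNReal.ofReal_mul (by norm_num), ENNReal.ofReal_ofNat]
        ring

lemma piece2 {α : ℝ} (hα : 1/2 ≤ α) {p : ℝ} (hp : 1 ≤ p) (f : ℝ → ℂ) (hf : Measurable f)
    {D : ℝ} (hD : 0 ≤ D) {m : ℕ} (hm : 1 ≤ m) :
    ∫⁻ x in In m, (‖f x‖₊:ℝ≥0∞)^p * ENNReal.ofReal (D * x^(-(2*α+1))) ∂(omegaM α)
      ≤ ENNReal.ofReal (D * 2^(2*α+1)) * (amalgamNorm α (ENNReal.ofReal p) ⊤ f)^p := by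
  set N := amalgamNorm α (ENNReal.ofReal p) ⊤ f with hN
  have hm1 : (1:ℝ) ≤ m := by exact_mod_cast hm
  have hm0 : (0:ℝ) < m := by linarith
  have hfm : Measurable fun x => (‖f x‖₊ : ℝ≥0∞) ^ p := hf.nnnorm.coe_nnreal_ennreal.pow measurable_const
  have step1 : ∫⁻ x in In m, (‖f x‖₊:ℝ≥0∞)^p * ENNReal.ofReal (D * x^(-(2*α+1))) ∂(omegaM α)
      ≤ ∫⁻ x in In m, ENNReal.ofReal (D * (m:ℝ)^(-(2*α+1))) * (‖f x‖₊:ℝ≥0∞)^p ∂(omegaM α) := by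
    apply setLIntegral_mono' (In_meas m)
    intro x hxI
    simp only [In, Set.mem_Ico] at hxI
    rw [mul_comm]
    apply mul_le_mul_left
    apply ENNReal.ofReal_le_ofReal
    exact mul_le_mul_of_nonneg_left
      (Real.rpow_le_rpow_of_nonpos hm0 hxI.1 (by linarith)) hD
  refine step1.trans ?_
  rw [lintegral_const_mul _ hfm]
  have hmneg : (0:ℝ) ≤ (m:ℝ)^(-(2*α+1)) := Real.rpow_nonneg hm0.le _
  calc ENNReal.ofReal (D * (m:ℝ)^(-(2*α+1)))
        * ∫⁻ x in In m, (‖f x‖₊:ℝ≥0∞)^p ∂(omegaM α)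
      ≤ ENNReal.ofReal (D * (m:ℝ)^(-(2*α+1))) * (wn α m * N^p) :=
        mul_le_mul_right (Jle hα hp f m) _
    _ ≤ ENNReal.ofReal (D * (m:ℝ)^(-(2*α+1)))
        * (ENNReal.ofReal (((m:ℝ)+1)^(2*α+1)) * N^p) :=
        mul_le_mul_right (mul_le_mul_left (wn_le hα m) _) _
    _ = (ENNReal.ofReal (D * (m:ℝ)^(-(2*α+1))) * ENNReal.ofReal (((m:ℝ)+1)^(2*α+1))) * N^p := by
        rw [mul_assoc]
    _ ≤ ENNReal.ofReal (D * 2^(2*α+1)) * N^p := by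
        apply mul_le_mul_left
        rw [← ENNReal.ofReal_mul (mul_nonneg hD hmneg)]
        apply ENNReal.ofReal_le_ofReal
        have key : ((m:ℝ)+1)^(2*α+1) ≤ 2^(2*α+1) * (m:ℝ)^(2*α+1) := by
          calc ((m:ℝ)+1)^(2*α+1) ≤ (2*(m:ℝ))^(2*α+1) :=
              Real.rpow_le_rpow (by linarith) (by linarith) (by linarith)
            _ = 2^(2*α+1) * (m:ℝ)^(2*α+1) := Real.mul_rpow (by norm_num) hm0.le
        have hmm : (m:ℝ)^(-(2*α+1)) * (m:ℝ)^(2*α+1) = 1 := by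
          rw [← Real.rpow_add hm0, show -(2*α+1) + (2*α+1) = 0 by ring, Real.rpow_zero]
        calc D * (m:ℝ)^(-(2*α+1)) * ((m:ℝ)+1)^(2*α+1)
            ≤ D * (m:ℝ)^(-(2*α+1)) * (2^(2*α+1) * (m:ℝ)^(2*α+1)) :=
              mul_le_mul_of_nonneg_left key (mul_nonneg hD hmneg)
          _ = D * 2^(2*α+1) * ((m:ℝ)^(-(2*α+1)) * (m:ℝ)^(2*α+1)) := by ring
          _ = D * 2^(2*α+1) := by rw [hmm, mul_one]

lemma main_est {α : ℝ} (hα : 1/2 ≤ α) {p : ℝ} (hp : 1 ≤ p) {D : ℝ} (hD1 : 1 ≤ D)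
    (hDb : ∀ x y : ℝ, 0 < x → 0 ≤ y →
      tau α y ((Set.Icc (0:ℝ) 1).indicator 1 : ℝ → ℝ) x ≤ D ∧
      (1 < |x - y| → tau α y ((Set.Icc (0:ℝ) 1).indicator 1 : ℝ → ℝ) x = 0) ∧
      (5 ≤ x → tau α y ((Set.Icc (0:ℝ) 1).indicator 1 : ℝ → ℝ) x ≤ D * x ^ (-(2*α+1))))
    (f : ℝ → ℂ) (hf : Measurable f) (y : ℝ) (hy : 0 ≤ y) :
    ∫⁻ x, (‖f x‖₊:ℝ≥0∞)^p
        * ENNReal.ofReal (tau α y ((Set.Icc (0:ℝ) 1).indicator 1 : ℝ → ℝ) x) ∂(omegaM α)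
      ≤ ENNReal.ofReal (D * (5 * 5^(2*α+1)) + 3 * (D * 2^(2*α+1)))
        * (amalgamNorm α (ENNReal.ofReal p) ⊤ f)^p := by
  have hD0 : 0 ≤ D := by linarith
  have h2p : (0:ℝ) < (2:ℝ)^(2*α+1) := Real.rpow_pos_of_pos (by norm_num) _
  have h5p : (0:ℝ) < (5:ℝ)^(2*α+1) := Real.rpow_pos_of_pos (by norm_num) _
  set N := amalgamNorm α (ENNReal.ofReal p) ⊤ f with hNdef
  set S2 := Set.Ici (5:ℝ) ∩ Set.Icc (y-1) (y+1) with hS2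
  have hS2m : MeasurableSet S2 := measurableSet_Ici.inter measurableSet_Icc
  have hfm : Measurable fun x => (‖f x‖₊ : ℝ≥0∞) ^ p := hf.nnnorm.coe_nnreal_ennreal.pow measurable_const
  set Ψ1 : ℝ → ℝ≥0∞ := (Set.Ioo (0:ℝ) 5).indicator (fun _ => ENNReal.ofReal D) with hΨ1
  set Ψ2 : ℝ → ℝ≥0∞ := S2.indicator (fun x => ENNReal.ofReal (D * x^(-(2*α+1)))) with hΨ2
  have hnull : omegaM α (Set.Iic 0) = 0 := by
    rw [omega_apply measurableSet_Iic]
    have hemp : Set.Iic (0:ℝ) ∩ Set.Ioi 0 = ∅ := by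
      ext z
      simp only [Set.mem_inter_iff, Set.mem_Iic, Set.mem_Ioi, Set.mem_empty_iff_false, iff_false,
        not_and, not_lt]
      exact fun h => h
    rw [hemp]
    simp
  have hae : ∀ᵐ x ∂(omegaM α), 0 < x := by
    rw [ae_iff]
    refine measure_mono_null (fun x hx => ?_) hnull
    simp only [Set.mem_setOf_eq, not_lt] at hx
    exact hx
  have hbd : ∀ x : ℝ, 0 < x →
      (‖f x‖₊:ℝ≥0∞)^p * ENNReal.ofReal (tau α y ((Set.Icc (0:ℝ) 1).indicator 1 : ℝ → ℝ) x)
        ≤ (‖f x‖₊:ℝ≥0∞)^p * Ψ1 x + (‖f x‖₊:ℝ≥0∞)^p * Ψ2 x := by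
    intro x hx
    obtain ⟨hB1, hB2, hB3⟩ := hDb x y hx hy
    rw [← mul_add]
    apply mul_le_mul_right
    rcases lt_or_ge x 5 with h5 | h5
    · have hmem : Ψ1 x = ENNReal.ofReal D := by
        rw [hΨ1, Set.indicator_of_mem (Set.mem_Ioo.mpr ⟨hx, h5⟩)]
      calc ENNReal.ofReal (tau α y ((Set.Icc (0:ℝ) 1).indicator 1 : ℝ → ℝ) x)
          ≤ ENNReal.ofReal D := ENNReal.ofReal_le_ofReal hB1
        _ = Ψ1 x := hmem.symm
        _ ≤ Ψ1 x + Ψ2 x := le_self_add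
    · by_cases hxy : |x - y| ≤ 1
      · obtain ⟨ha1, ha2⟩ := abs_le.mp hxy
        have hmem : x ∈ S2 := by
          rw [hS2]
          exact ⟨h5, by constructor <;> linarith⟩
        calc ENNReal.ofReal (tau α y ((Set.Icc (0:ℝ) 1).indicator 1 : ℝ → ℝ) x)
            ≤ ENNReal.ofReal (D * x^(-(2*α+1))) := ENNReal.ofReal_le_ofReal (hB3 h5)
          _ = Ψ2 x := by rw [hΨ2, Set.indicator_of_mem hmem]
          _ ≤ Ψ1 x + Ψ2 x := le_add_self
      · rw [hB2 (not_le.mp hxy)]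
        simp
  have step : ∫⁻ x, (‖f x‖₊:ℝ≥0∞)^p
        * ENNReal.ofReal (tau α y ((Set.Icc (0:ℝ) 1).indicator 1 : ℝ → ℝ) x) ∂(omegaM α)
      ≤ ∫⁻ x, ((‖f x‖₊:ℝ≥0∞)^p * Ψ1 x + (‖f x‖₊:ℝ≥0∞)^p * Ψ2 x) ∂(omegaM α) :=
    lintegral_mono_ae (hae.mono fun x hx => hbd x hx)
  refine step.trans ?_
  have hΨ1m : Measurable Ψ1 := measurable_const.indicator measurableSet_Ioo
  rw [lintegral_add_left (f := fun x => (‖f x‖₊:ℝ≥0∞)^p * Ψ1 x) (hfm.mul hΨ1m)]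
  have t1 : ∫⁻ x, (‖f x‖₊:ℝ≥0∞)^p * Ψ1 x ∂(omegaM α)
      ≤ ENNReal.ofReal (D * (5 * 5^(2*α+1))) * N^p := by
    have e : ∀ x, (‖f x‖₊:ℝ≥0∞)^p * Ψ1 x
        = (Set.Ioo (0:ℝ) 5).indicator (fun x => ENNReal.ofReal D * (‖f x‖₊:ℝ≥0∞)^p) x := by
      intro x
      by_cases hx : x ∈ Set.Ioo (0:ℝ) 5 <;> simp [hΨ1, hx, mul_comm]
    rw [lintegral_congr e, lintegral_indicator measurableSet_Ioo, lintegral_const_mul _ hfm]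
    calc ENNReal.ofReal D * ∫⁻ x in Set.Ioo (0:ℝ) 5, (‖f x‖₊:ℝ≥0∞)^p ∂(omegaM α)
        ≤ ENNReal.ofReal D * (ENNReal.ofReal (5 * 5^(2*α+1)) * N^p) :=
          mul_le_mul_right (piece1 hα hp f) _
      _ = ENNReal.ofReal (D * (5 * 5^(2*α+1))) * N^p := by
          rw [← mul_assoc, ← ENNReal.ofReal_mul hD0]
  have t2 : ∫⁻ x, (‖f x‖₊:ℝ≥0∞)^p * Ψ2 x ∂(omegaM α)
      ≤ ENNReal.ofReal (3 * (D * 2^(2*α+1))) * N^p := by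
    have e : ∀ x, (‖f x‖₊:ℝ≥0∞)^p * Ψ2 x
        = S2.indicator (fun x => (‖f x‖₊:ℝ≥0∞)^p * ENNReal.ofReal (D * x^(-(2*α+1)))) x := by
      intro x
      by_cases hx : x ∈ S2 <;> simp [hΨ2, hx]
    rw [lintegral_congr e, lintegral_indicator hS2m]
    rcases lt_or_ge y 4 with hy4 | hy4
    · have hemp : S2 = ∅ := by
        rw [hS2]
        ext x
        simp only [Set.mem_inter_iff, Set.mem_Ici, Set.mem_Icc, Set.mem_empty_iff_false, iff_false,
          not_and]
        intro h5 _ hr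
        linarith
      rw [hemp]
      simp
    · set n0 := ⌊y⌋₊ with hn0
      have h4n : 4 ≤ n0 := Nat.le_floor (by exact_mod_cast hy4)
      have hfl : (n0:ℝ) ≤ y := Nat.floor_le hy
      have hfl2 : y < (n0:ℝ) + 1 := Nat.lt_floor_add_one y
      have h1n : 1 ≤ n0 := by omega
      have hcast : ((n0 - 1 : ℕ):ℝ) = (n0:ℝ) - 1 := by
        push_cast [h1n]
        ring
      have hsub : S2 ⊆ (In (n0-1) ∪ In n0) ∪ In (n0+1) := by
        rintro x ⟨h5, hx1, hx2⟩
        simp only [In, Set.mem_union, Set.mem_Ico, hcast]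
        push_cast
        rcases lt_or_ge x (n0:ℝ) with h | h
        · exact Or.inl (Or.inl ⟨by linarith, by linarith⟩)
        rcases lt_or_ge x ((n0:ℝ)+1) with h' | h'
        · exact Or.inl (Or.inr ⟨h, h'⟩)
        · exact Or.inr ⟨h', by linarith⟩
      calc ∫⁻ x in S2, (‖f x‖₊:ℝ≥0∞)^p * ENNReal.ofReal (D * x^(-(2*α+1))) ∂(omegaM α)
          ≤ ∫⁻ x in (In (n0-1) ∪ In n0) ∪ In (n0+1),
              (‖f x‖₊:ℝ≥0∞)^p * ENNReal.ofReal (D * x^(-(2*α+1))) ∂(omegaM α) :=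
            lintegral_mono_set hsub
        _ ≤ (ENNReal.ofReal (D * 2^(2*α+1)) * N^p + ENNReal.ofReal (D * 2^(2*α+1)) * N^p)
            + ENNReal.ofReal (D * 2^(2*α+1)) * N^p := by
            refine (lintegral_union_le _ _ _).trans
              (add_le_add ?_ (piece2 hα hp f hf hD0 (by omega)))
            exact (lintegral_union_le _ _ _).trans
              (add_le_add (piece2 hα hp f hf hD0 (by omega)) (piece2 hα hp f hf hD0 (by omega)))
        _ = ENNReal.ofReal (3 * (D * 2^(2*α+1))) * N^p := by
            conv_rhs => rw [ENNReal.ofReal_mul (by norm_num : (0:ℝ) ≤ 3), ENNReal.ofReal_ofNat]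
            ring
  refine (add_le_add t1 t2).trans (le_of_eq ?_)
  rw [← add_mul, ← ENNReal.ofReal_add (mul_nonneg hD0 (by positivity))
    (mul_nonneg (by norm_num) (mul_nonneg hD0 (by positivity)))]

end AuxAmalgam

/-- The continuous `(p,∞)`-amalgam norm is dominated by the discrete one. -/
theorem continuous_le_discrete_amalgam (α : ℝ) (hα : 1/2 ≤ α) (p : ℝ) (hp : 1 ≤ p) :
    ∃ C : ℝ, 0 < C ∧ ∀ f : ℝ → ℂ, Measurable f →
      contNorm α p f ≤ ENNReal.ofReal C * amalgamNorm α (ENNReal.ofReal p) ⊤ f := by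
  obtain ⟨D, hD1, hDb⟩ := tau_master hα
  have hp0 : (0:ℝ) < p := by linarith
  have h5p : (0:ℝ) < (5:ℝ)^(2*α+1) := Real.rpow_pos_of_pos (by norm_num) _
  have h2p : (0:ℝ) < (2:ℝ)^(2*α+1) := Real.rpow_pos_of_pos (by norm_num) _
  have hA1 : (1:ℝ) ≤ 5^(2*α+1) := by
    have := Real.rpow_le_rpow_of_exponent_le (show (1:ℝ) ≤ 5 by norm_num)
      (show (0:ℝ) ≤ 2*α+1 by linarith)
    simpa using this
  set E := D * (5 * 5^(2*α+1)) + 3 * (D * 2^(2*α+1)) with hE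
  have hE1 : 1 ≤ E := by nlinarith
  refine ⟨E, by linarith, ?_⟩
  intro f hf
  simp only [contNorm]
  refine iSup₂_le fun y hy => ?_
  have hmain := main_est hα hp hD1 hDb f hf y hy
  refine le_trans (ENNReal.rpow_le_rpow hmain (one_div_nonneg.mpr hp0.le)) ?_
  rw [ENNReal.mul_rpow_of_nonneg _ _ (one_div_nonneg.mpr hp0.le), ← ENNReal.rpow_mul,
    mul_one_div_cancel hp0.ne', ENNReal.rpow_one]
  apply mul_le_mul_left
  calc (ENNReal.ofReal E)^(1/p) ≤ (ENNReal.ofReal E)^(1:ℝ) :=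
        ENNReal.rpow_le_rpow_of_exponent_le (ENNReal.one_le_ofReal.mpr hE1)
          (by rw [div_le_one hp0]; exact hp)
    _ = ENNReal.ofReal E := ENNReal.rpow_one _
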